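/- arXiv:1811.02979 — 3 statements merged into one kernel-verified Lean document; each statement's English description precedes it below -/
import Mathlib

section
/- The derivatives of f(x) = log(1 + exp(x)) at zero satisfy f^{(q)}(0) = (1/2^q) * sum_{m=0}^{q-2} (-1)^m A(q-1, m), where A(n, m) denotes the Eulerian numbers. -/
open Polynomial

/-- Eulerian numbers `A n m`: number of permutations of `{1,...,n}` with exactly `m` descents. -/
def eulerianNumber : ℕ → ℕ → ℕ
  | 0, 0 => 1
  | 0, _ + 1 => 0
  | n + 1, 0 => 1
  | n + 1, m + 1 => (m + 2) * eulerianNumber n (m + 1) + (n - m) * eulerianNumber n m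

lemma eulerian_zero_of_le : ∀ (n m : ℕ), 1 ≤ n → n ≤ m → eulerianNumber n m = 0 := by
  intro n
  induction n with
  | zero => intro m h; omega
  | succ k ih =>
    intro m h1 h2
    obtain ⟨m', rfl⟩ : ∃ m', m = m' + 1 := ⟨m - 1, by omega⟩
    rw [eulerianNumber]
    have hk : k - m' = 0 := by omega
    rcases Nat.eq_zero_or_pos k with hk0 | hk1
    · subst hk0
      have h0 : eulerianNumber 0 (m'+1) = 0 := rfl
      simp [h0, hk]
    · rw [ih (m'+1) hk1 (by omega), hk]; ring

lemma deriv_term (m k : ℕ) :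
    (X : ℝ[X]) * (1 - X) * derivative ((X:ℝ[X])^(m+1)*(1-X)^(k+1)) =
      C ((m:ℝ)+1) * (X^(m+1)*(1-X)^(k+2)) - C ((k:ℝ)+1) * (X^(m+2)*(1-X)^(k+1)) := by
  simp only [derivative_mul, derivative_pow, derivative_X, derivative_sub, derivative_one,
    Nat.add_sub_cancel, mul_one, zero_sub, Nat.cast_add, Nat.cast_one, C_add, C_1]
  ring

noncomputable def Epoly (n : ℕ) : ℝ[X] :=
  ∑ m ∈ Finset.range n, C ((-1:ℝ)^m * (eulerianNumber n m : ℝ)) * (X^(m+1) * (1-X)^(n-m))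

lemma coeff_id (N m : ℕ) (hm : m ≤ N) :
    (-1:ℝ)^(m+1) * (eulerianNumber (N+1) (m+1) : ℝ) * (((m:ℝ)+1)+1)
      - (-1:ℝ)^m * (eulerianNumber (N+1) m : ℝ) * ((N:ℝ)-m+1)
    = (-1:ℝ)^(m+1) * (eulerianNumber (N+2) (m+1) : ℝ) := by
  have hdef : eulerianNumber (N+2) (m+1)
      = (m+2) * eulerianNumber (N+1) (m+1) + (N+1-m) * eulerianNumber (N+1) m := rfl
  rw [hdef]
  have hc : ((N+1-m : ℕ):ℝ) = (N:ℝ)+1-m := by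
    rw [Nat.cast_sub (by omega)]; push_cast; ring
  push_cast [hc]
  ring

lemma Epoly_succ (N : ℕ) :
    derivative (Epoly (N+1)) * (X * (1-X)) = Epoly (N+2) := by
  have key : derivative (Epoly (N+1)) * (X * (1-X)) =
      ∑ m ∈ Finset.range (N+1),
        (C ((-1:ℝ)^m * (eulerianNumber (N+1) m : ℝ) * ((m:ℝ)+1)) * (X^(m+1)*(1-X)^(N+2-m))
         - C ((-1:ℝ)^m * (eulerianNumber (N+1) m : ℝ) * ((N:ℝ)-m+1)) * (X^(m+2)*(1-X)^(N+1-m))) := by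
    rw [Epoly, derivative_sum, Finset.sum_mul]
    refine Finset.sum_congr rfl ?_
    intro m hm
    rw [Finset.mem_range] at hm
    have h1 : N+1-m = (N-m)+1 := by omega
    have h2 : N+2-m = (N-m)+2 := by omega
    rw [derivative_C_mul, h1, h2]
    have hd := deriv_term m (N-m)
    have hc : ((N-m : ℕ):ℝ) = (N:ℝ) - m := Nat.cast_sub (by omega)
    rw [hc] at hd
    calc C ((-1:ℝ)^m * (eulerianNumber (N+1) m : ℝ)) * derivative ((X:ℝ[X])^(m+1)*(1-X)^((N-m)+1)) * (X * (1-X))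
        = C ((-1:ℝ)^m * (eulerianNumber (N+1) m : ℝ)) *
            ((X:ℝ[X]) * (1-X) * derivative ((X:ℝ[X])^(m+1)*(1-X)^((N-m)+1))) := by ring
      _ = _ := by rw [hd]; simp only [C_mul]; ring
  rw [key, Finset.sum_sub_distrib]
  have hS1 : (∑ m ∈ Finset.range (N+1),
        C ((-1:ℝ)^m * (eulerianNumber (N+1) m : ℝ) * ((m:ℝ)+1)) * (X^(m+1)*(1-X)^(N+2-m)))
      = ∑ m ∈ Finset.range (N+2),
        C ((-1:ℝ)^m * (eulerianNumber (N+1) m : ℝ) * ((m:ℝ)+1)) * ((X:ℝ[X])^(m+1)*(1-X)^(N+2-m)) := by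
    symm
    rw [Finset.sum_range_succ, eulerian_zero_of_le (N+1) (N+1) (by omega) le_rfl]
    simp
  rw [hS1, Finset.sum_range_succ' _ (N+1)]
  rw [Epoly, Finset.sum_range_succ' _ (N+1)]
  rw [add_sub_right_comm]
  congr 1
  · rw [← Finset.sum_sub_distrib]
    refine Finset.sum_congr rfl ?_
    intro m hm
    rw [Finset.mem_range] at hm
    have h3 : N+2-(m+1) = N+1-m := by omega
    rw [h3, ← sub_mul, ← C_sub]
    congr 1
    have h := coeff_id N m (by omega)
    push_cast at h ⊢
    exact congrArg C h
  · -- first terms (m = 0)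
    have e0 : eulerianNumber (N+1) 0 = 1 := rfl
    have e0' : eulerianNumber (N+2) 0 = 1 := rfl
    rw [e0, e0']
    norm_num

noncomputable def sfun (x : ℝ) : ℝ := Real.exp x / (1 + Real.exp x)

lemma one_add_exp_ne (x : ℝ) : 1 + Real.exp x ≠ 0 := by positivity

lemma hasDerivAt_sfun (x : ℝ) : HasDerivAt sfun (sfun x - (sfun x)^2) x := by
  have h1 : HasDerivAt (fun y : ℝ => 1 + Real.exp y) (Real.exp x) x :=
    (Real.hasDerivAt_exp x).const_add 1
  have h2 := (Real.hasDerivAt_exp x).div h1 (one_add_exp_ne x)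
  refine h2.congr_deriv ?_
  unfold sfun
  field_simp

lemma hasDerivAt_eval (P : ℝ[X]) (x : ℝ) :
    HasDerivAt (fun y => P.eval (sfun y)) (P.derivative.eval (sfun x) * (sfun x - (sfun x)^2)) x :=
  (P.hasDerivAt (sfun x)).comp x (hasDerivAt_sfun x)

lemma iter_deriv_sfun : ∀ n : ℕ, ∀ x : ℝ, iteratedDeriv (n+1) sfun x = (Epoly (n+1)).eval (sfun x) := by
  intro n
  induction n with
  | zero =>
    intro x
    rw [iteratedDeriv_one, (hasDerivAt_sfun x).deriv]
    have e0 : eulerianNumber 1 0 = 1 := rfl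
    simp [Epoly, e0]
    ring
  | succ k ih =>
    intro x
    rw [iteratedDeriv_succ]
    have hfn : iteratedDeriv (k+1) sfun = fun y => (Epoly (k+1)).eval (sfun y) := funext ih
    rw [hfn, (hasDerivAt_eval _ x).deriv, ← Epoly_succ k]
    simp only [eval_mul, eval_X, eval_sub, eval_one]
    ring

/-- for `q ≥ 2`, the `q`-th derivative at `0` of `f(x) = log(1+exp x)` equals
`(1/2^q) * ∑_{m=0}^{q-2} (-1)^m A(q-1, m)`. -/
theorem iteratedDeriv_logistic_eq_eulerian_sum (q : ℕ) (hq : 2 ≤ q) :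
    iteratedDeriv q (fun x : ℝ => Real.log (1 + Real.exp x)) 0 =
      (1 / 2 ^ q) * ∑ m ∈ Finset.range (q - 1), (-1 : ℝ) ^ m * (eulerianNumber (q - 1) m : ℝ) := by
  obtain ⟨N, rfl⟩ : ∃ N, q = N + 2 := ⟨q - 2, by omega⟩
  have hderiv : deriv (fun x : ℝ => Real.log (1 + Real.exp x)) = sfun := by
    funext x
    have h1 : HasDerivAt (fun y : ℝ => 1 + Real.exp y) (Real.exp x) x :=
      (Real.hasDerivAt_exp x).const_add 1
    have h2 := h1.log (one_add_exp_ne x)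
    rw [h2.deriv]
    rfl
  have hs0 : sfun 0 = 1/2 := by
    unfold sfun; rw [Real.exp_zero]; norm_num
  rw [show N+2 = (N+1)+1 from rfl, iteratedDeriv_succ', hderiv, iter_deriv_sfun N 0, hs0]
  have hq1 : N + 2 - 1 = N + 1 := by omega
  rw [hq1, Epoly, eval_finset_sum, Finset.mul_sum]
  refine Finset.sum_congr rfl ?_
  intro m hm
  rw [Finset.mem_range] at hm
  simp only [eval_mul, eval_C, eval_pow, eval_X, eval_sub, eval_one]
  have hp : ((1:ℝ)/2)^(m+1) * (1 - 1/2)^(N+1-m) = (1/2)^(N+2) := by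
    norm_num
    rw [← pow_add]
    congr 1
    omega
  rw [mul_assoc, hp]
  have : ((1:ℝ)/2)^(N+2) = 1 / 2^(N+2) := by
    rw [div_pow, one_pow]
  rw [this]
  ring
end

section
/- There exists a universal constant C > 0 such that for all integers q >= 1, |f^{(q)}(0) / q!| <= C / (q * pi^q), where f(x) = log(1 + exp(x)). -/
open Complex Metric Filter Asymptotics Set Topology

noncomputable section LogisticAux

/-- complex sigmoid -/
def Gc : ℂ → ℂ := fun z => Complex.exp z / (1 + Complex.exp z)

/-- real sigmoid -/
def gr : ℝ → ℝ := fun x => Real.exp x / (1 + Real.exp x)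

def Uc : Set ℂ := {z | 1 + Complex.exp z ≠ 0}

lemma Uc_open : IsOpen Uc :=
  isOpen_ne.preimage (by continuity)

lemma one_add_exp_real_pos (x : ℝ) : 0 < 1 + Real.exp x := by positivity

lemma real_mem_Uc (x : ℝ) : (x : ℂ) ∈ Uc := by
  simp only [Uc, Set.mem_setOf_eq, ← Complex.ofReal_exp, ← Complex.ofReal_one,
    ← Complex.ofReal_add]
  exact_mod_cast (one_add_exp_real_pos x).ne'

lemma Gc_real (x : ℝ) : Gc (x : ℂ) = (gr x : ℂ) := by
  simp only [Gc, gr, ← Complex.ofReal_exp]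
  push_cast
  rfl

lemma Gc_diffOn : DifferentiableOn ℂ Gc Uc := by
  apply DifferentiableOn.div
  · exact Complex.differentiable_exp.differentiableOn
  · exact (differentiable_const _).add Complex.differentiable_exp |>.differentiableOn
  · exact fun z hz => hz

/-- zeros of `1 + exp` -/
lemma one_add_exp_eq_zero_iff (z : ℂ) : 1 + Complex.exp z = 0 ↔
    ∃ n : ℤ, z = (2 * n + 1) * Real.pi * Complex.I := by
  constructor
  · intro h
    have h1 : Complex.exp (z - Real.pi * Complex.I) = 1 := by
      rw [Complex.exp_sub, Complex.exp_pi_mul_I]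
      have : Complex.exp z = -1 := by linear_combination h
      rw [this]; ring
    obtain ⟨n, hn⟩ := Complex.exp_eq_one_iff.mp h1
    exact ⟨n, by rw [sub_eq_iff_eq_add] at hn; rw [hn]; push_cast; ring⟩
  · rintro ⟨n, rfl⟩
    have : Complex.exp ((2 * n + 1) * Real.pi * Complex.I) = -1 := by
      have : ((2 * n + 1 : ℂ)) * Real.pi * Complex.I
          = Real.pi * Complex.I + n * (2 * Real.pi * Complex.I) := by push_cast; ring
      rw [this, Complex.exp_add, Complex.exp_pi_mul_I, Complex.exp_int_mul_two_pi_mul_I]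
      ring
    rw [this]; ring

lemma mem_Uc_of_norm_lt {z : ℂ} (h : ‖z‖ < 3 * Real.pi)
    (h1 : z ≠ Real.pi * Complex.I) (h2 : z ≠ -(Real.pi * Complex.I)) : z ∈ Uc := by
  intro hz
  obtain ⟨n, rfl⟩ := (one_add_exp_eq_zero_iff _).mp hz
  have habs : ‖(2 * n + 1 : ℂ) * Real.pi * Complex.I‖
      = |(2 * (n:ℝ) + 1)| * Real.pi := by
    rw [norm_mul, norm_mul, Complex.norm_I, Complex.norm_real, Real.norm_eq_abs, abs_of_pos Real.pi_pos, mul_one]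
    congr 1
    have : ((2 * n + 1 : ℂ)) = ((2 * (n:ℝ) + 1 : ℝ) : ℂ) := by push_cast; ring
    rw [this, Complex.norm_real, Real.norm_eq_abs]
  rw [habs] at h
  have hpi := Real.pi_pos
  have hn3 : |(2 * (n:ℝ) + 1)| < 3 := by
    by_contra hcon
    push_neg at hcon
    nlinarith
  rw [abs_lt] at hn3
  have hlb : (-2:ℝ) < (n:ℝ) := by linarith
  have hub : (n:ℝ) < 1 := by linarith
  have hlb' : (-2:ℤ) < n := by exact_mod_cast hlb
  have hub' : n < 1 := by exact_mod_cast hub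
  have hn : n = 0 ∨ n = -1 := by omega
  rcases hn with rfl | rfl
  · exact h1 (by push_cast; ring)
  · exact h2 (by push_cast; ring)


lemma my_iteratedDerivWithin_of_isOpen {f : ℂ → ℂ} {s : Set ℂ} {x : ℂ} (n : ℕ)
    (hs : IsOpen s) (hx : x ∈ s) :
    iteratedDerivWithin n f s x = iteratedDeriv n f x := by
  rw [iteratedDerivWithin_eq_iteratedFDerivWithin, iteratedDeriv_eq_iteratedFDeriv,
    iteratedFDerivWithin_of_isOpen n hs hx]

/-- iterated derivative of `(· - a)⁻¹`. -/
lemma iteratedDeriv_inv_sub (a : ℂ) : ∀ (n : ℕ) (z : ℂ), z ≠ a →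
    iteratedDeriv n (fun w => (w - a)⁻¹) z
      = (-1) ^ n * (n.factorial : ℂ) * (z - a) ^ (-(n : ℤ) - 1) := by
  intro n
  induction n with
  | zero => intro z hz; simp [zpow_neg, zpow_one]
  | succ n ih =>
    intro z hz
    rw [iteratedDeriv_succ]
    have hev : iteratedDeriv n (fun w => (w - a)⁻¹)
        =ᶠ[nhds z] fun w => (-1) ^ n * (n.factorial : ℂ) * (w - a) ^ (-(n : ℤ) - 1) := by
      filter_upwards [IsOpen.mem_nhds isOpen_compl_singleton hz] with w hw using ih w hw
    rw [hev.deriv_eq]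
    have hd : HasDerivAt (fun w : ℂ => (-1) ^ n * (n.factorial : ℂ) * (w - a) ^ (-(n : ℤ) - 1))
        ((-1) ^ n * (n.factorial : ℂ) * ((-(n : ℤ) - 1) * (z - a) ^ (-(n : ℤ) - 2))) z := by
      have h1 : HasDerivAt (fun w : ℂ => w - a) 1 z := (hasDerivAt_id z).sub_const a
      have h2 := (hasDerivAt_zpow (-(n : ℤ) - 1) (z - a)
        (Or.inl (sub_ne_zero.mpr hz))).comp z h1
      have h3 := h2.const_mul ((-1) ^ n * (n.factorial : ℂ))
      have h4 : HasDerivAt (fun w : ℂ => (-1) ^ n * (n.factorial : ℂ) * (w - a) ^ (-(n : ℤ) - 1))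
          ((-1) ^ n * (n.factorial : ℂ) * (((-(n : ℤ) - 1 : ℤ) : ℂ)
            * (z - a) ^ (-(n : ℤ) - 1 - 1) * 1)) z := by
        simpa [Function.comp] using h3
      convert h4 using 1
      push_cast
      ring_nf
    rw [hd.deriv]
    push_cast [Nat.factorial_succ]
    have hne : z - a ≠ 0 := sub_ne_zero.mpr hz
    rw [show (-(n : ℤ) - 2) = (-(n : ℤ) - 1) + (-1 : ℤ) by ring,
      show (-((n : ℤ) + 1) - 1) = (-(n : ℤ) - 1) + (-1 : ℤ) by ring]
    rw [zpow_add₀ hne]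
    ring

section Transfer

variable {F : ℂ → ℂ} {u : ℝ → ℝ} {U : Set ℂ}

/-- transfer of iterated derivatives from ℂ to ℝ for functions real on the reals -/
lemma iteratedDeriv_real_complex (hU : IsOpen U) (hF : DifferentiableOn ℂ F U)
    (hreal : ∀ x : ℝ, (x : ℂ) ∈ U) (hu : ∀ x : ℝ, F (x : ℂ) = (u x : ℂ)) :
    ∀ (n : ℕ) (x : ℝ), ((iteratedDeriv n u x : ℝ) : ℂ) = iteratedDeriv n F (x : ℂ) := by
  have hA : AnalyticOnNhd ℂ F U := hF.analyticOnNhd hU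
  intro n
  induction n with
  | zero => intro x; simp [hu x]
  | succ n ih =>
    intro x
    have hAn : AnalyticOnNhd ℂ (iteratedDeriv n F) U := by
      rw [iteratedDeriv_eq_iterate]
      exact hA.iterated_deriv n
    have hdiff : DifferentiableAt ℂ (iteratedDeriv n F) (x : ℂ) :=
      (hAn _ (hreal x)).differentiableAt
    set d := deriv (iteratedDeriv n F) (x : ℂ) with hd
    have hder : HasDerivAt (iteratedDeriv n F) d (x : ℂ) := hdiff.hasDerivAt
    have hre : HasDerivAt (fun y : ℝ => ((iteratedDeriv n F) (y : ℂ)).re) d.re x :=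
      hder.real_of_complex
    have heq : (fun y : ℝ => ((iteratedDeriv n F) (y : ℂ)).re) = iteratedDeriv n u := by
      funext y
      rw [← ih y, Complex.ofReal_re]
    rw [heq] at hre
    -- show d is real
    have hofr := hre.ofReal_comp
    have hcomp : HasDerivAt (fun y : ℝ => (iteratedDeriv n F) (y : ℂ)) d x :=
      hder.comp_ofReal
    have hofr' : HasDerivAt (fun y : ℝ => (iteratedDeriv n F) (y : ℂ)) ((d.re : ℝ) : ℂ) x := by
      refine hofr.congr_of_eventuallyEq ?_
      filter_upwards with y
      exact (ih y).symm
    have hdr : ((d.re : ℝ) : ℂ) = d := hofr'.unique hcomp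
    rw [iteratedDeriv_succ, iteratedDeriv_succ, hre.deriv, ← hd, hdr]

end Transfer

def c1 : ℂ := Real.pi * Complex.I

lemma abs_c1 : ‖c1‖ = Real.pi := by
  simp [c1, abs_of_pos Real.pi_pos]

lemma exp_c1 : Complex.exp c1 = -1 := Complex.exp_pi_mul_I

lemma exp_neg_c1 : Complex.exp (-c1) = -1 := by
  rw [Complex.exp_neg, exp_c1]
  norm_num

lemma c1_ne_neg_c1 : c1 ≠ -c1 := by
  simp only [c1, ne_eq, ← neg_mul]
  intro h
  have := mul_right_cancel₀ Complex.I_ne_zero h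
  have hpi : (Real.pi : ℂ) ≠ 0 := by exact_mod_cast Real.pi_ne_zero
  apply hpi
  linear_combination this / 2

/-- residue limit at a pole of the sigmoid -/
lemma tendsto_sub_mul_Gc {c : ℂ} (hc : Complex.exp c = -1) :
    Tendsto (fun z => (z - c) * Gc z) (𝓝[≠] c) (𝓝 1) := by
  have h1 : HasDerivAt (fun z : ℂ => 1 + Complex.exp z) (Complex.exp c) c :=
    (Complex.hasDerivAt_exp c).const_add 1
  have h2 := hasDerivAt_iff_tendsto_slope.mp h1
  have h3 : Tendsto (fun z : ℂ => (1 + Complex.exp z) / (z - c)) (𝓝[≠] c) (𝓝 (-1)) := by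
    rw [← hc]
    refine h2.congr' ?_
    filter_upwards [self_mem_nhdsWithin] with z hz
    rw [slope_def_field, hc]
    congr 1
    ring
  have h4 : Tendsto (fun z : ℂ => ((1 + Complex.exp z) / (z - c))⁻¹) (𝓝[≠] c)
      (𝓝 ((-1 : ℂ)⁻¹)) := h3.inv₀ (by norm_num)
  have h5 : Tendsto (fun z : ℂ => Complex.exp z) (𝓝[≠] c) (𝓝 (-1)) := by
    rw [← hc]
    exact Complex.continuous_exp.continuousAt.continuousWithinAt
  have h6 := h5.mul h4
  have : (-1 : ℂ) * (-1 : ℂ)⁻¹ = 1 := by norm_num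
  rw [this] at h6
  refine h6.congr' ?_
  filter_upwards [self_mem_nhdsWithin] with z hz
  simp only [Gc]
  rw [inv_div]
  ring

/-- little-o estimate at a pole after subtracting principal parts -/
lemma isLittleO_W {c c' : ℂ} (hc : Complex.exp c = -1) (hcc' : c ≠ c') :
    (fun z => (Gc z - (z - c)⁻¹ - (z - c')⁻¹) -
        (Gc c - (c - c)⁻¹ - (c - c')⁻¹)) =o[𝓝[≠] c] fun z => (z - c)⁻¹ := by
  set W : ℂ → ℂ := fun z => Gc z - (z - c)⁻¹ - (z - c')⁻¹ with hW
  have key : Tendsto (fun z => (z - c) * (W z - W c)) (𝓝[≠] c) (𝓝 0) := by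
    have h1 := tendsto_sub_mul_Gc hc
    have h2 : Tendsto (fun z : ℂ => (z - c) * ((z - c')⁻¹ + W c)) (𝓝[≠] c)
        (𝓝 0) := by
      have hcont : ContinuousAt (fun z : ℂ => (z - c) * ((z - c')⁻¹ + W c)) c := by
        refine ((continuous_id.sub continuous_const).continuousAt).mul
          ((ContinuousAt.inv₀ ((continuous_id.sub continuous_const).continuousAt)
            ?_).add continuousAt_const)
        simpa using sub_ne_zero.mpr hcc'
      have h2' : Tendsto (fun z : ℂ => (z - c) * ((z - c')⁻¹ + W c)) (𝓝[{c}ᶜ] c)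
          (𝓝 ((c - c) * ((c - c')⁻¹ + W c))) := hcont.continuousWithinAt
      simpa using h2'
    have h3 := (h1.sub (tendsto_const_nhds (x := (1:ℂ)))).sub h2
    rw [show (1:ℂ) - 1 - 0 = 0 by ring] at h3
    refine h3.congr' ?_
    filter_upwards [self_mem_nhdsWithin] with z hz
    have hzc : z - c ≠ 0 := sub_ne_zero.mpr hz
    have hone : (z - c) * (z - c)⁻¹ = 1 := mul_inv_cancel₀ hzc
    simp only [hW]
    linear_combination hone
  have h1 : (fun z => (z - c) * (W z - W c)) =o[𝓝[≠] c] (fun _ => (1 : ℂ)) :=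
    (Asymptotics.isLittleO_one_iff ℂ).mpr key
  have h2 := h1.mul_isBigO (isBigO_refl (fun z : ℂ => (z - c)⁻¹) (𝓝[≠] c))
  refine h2.congr' ?_ ?_
  · filter_upwards [self_mem_nhdsWithin] with z hz
    have hzc : z - c ≠ 0 := sub_ne_zero.mpr hz
    have hone : (z - c) * (z - c)⁻¹ = 1 := mul_inv_cancel₀ hzc
    linear_combination (W z - W c) * hone
  · filter_upwards with z
    rw [one_mul]


def Hc : ℂ → ℂ := fun z => Gc z - (z - c1)⁻¹ - (z - (-c1))⁻¹

def Rr : ℝ := 3 * Real.pi / 2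

lemma Hc_diffOn : DifferentiableOn ℂ Hc ((ball (0:ℂ) Rr) \ {c1, -c1}) := by
  have hsub : (ball (0:ℂ) Rr) \ {c1, -c1} ⊆ Uc := by
    rintro z ⟨hz1, hz2⟩
    simp only [Set.mem_insert_iff, Set.mem_singleton_iff, not_or] at hz2
    refine mem_Uc_of_norm_lt ?_ ?_ ?_
    · have := mem_ball_zero_iff.mp hz1
      have hpi := Real.pi_pos
      calc ‖z‖ < Rr := this
        _ < 3 * Real.pi := by rw [Rr]; linarith
    · simpa [c1] using hz2.1
    · simpa [c1] using hz2.2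
  refine ((Gc_diffOn.mono hsub).sub ?_).sub ?_
  · intro z hz
    refine (DifferentiableAt.differentiableWithinAt ?_)
    refine DifferentiableAt.inv ((differentiableAt_id.sub (differentiableAt_const _))) ?_
    refine sub_ne_zero.mpr ?_
    simp only [Set.mem_diff, Set.mem_insert_iff, Set.mem_singleton_iff, not_or] at hz
    exact hz.2.1
  · intro z hz
    refine (DifferentiableAt.differentiableWithinAt ?_)
    refine DifferentiableAt.inv ((differentiableAt_id.sub (differentiableAt_const _))) ?_
    refine sub_ne_zero.mpr ?_
    simp only [Set.mem_diff, Set.mem_insert_iff, Set.mem_singleton_iff, not_or] at hz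
    exact fun h => hz.2.2 (by rw [h])

def H1 : ℂ → ℂ := Function.update Hc c1 (limUnder (𝓝[≠] c1) Hc)

def Ht : ℂ → ℂ := Function.update H1 (-c1) (limUnder (𝓝[≠] (-c1)) H1)

lemma c1_mem_ball : c1 ∈ ball (0:ℂ) Rr := by
  rw [mem_ball_zero_iff, abs_c1, Rr]
  have := Real.pi_pos; linarith

lemma neg_c1_mem_ball : -c1 ∈ ball (0:ℂ) Rr := by
  rw [mem_ball_zero_iff, norm_neg, abs_c1, Rr]
  have := Real.pi_pos; linarith

lemma H1_diffOn : DifferentiableOn ℂ H1 ((ball (0:ℂ) Rr) \ {-c1}) := by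
  refine Complex.differentiableOn_update_limUnder_of_isLittleO ?_ ?_ ?_
  · refine IsOpen.mem_nhds (isOpen_ball.sdiff isClosed_singleton) ?_
    exact ⟨c1_mem_ball, by simpa using c1_ne_neg_c1⟩
  · refine Hc_diffOn.mono ?_
    intro z hz
    simp only [Set.mem_diff, Set.mem_singleton_iff, Set.mem_insert_iff, not_or] at hz ⊢
    tauto
  · simpa [Hc] using isLittleO_W exp_c1 c1_ne_neg_c1

lemma Ht_diffOn : DifferentiableOn ℂ Ht (ball (0:ℂ) Rr) := by
  refine Complex.differentiableOn_update_limUnder_of_isLittleO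
    (IsOpen.mem_nhds isOpen_ball neg_c1_mem_ball) ?_ ?_
  · refine H1_diffOn.mono ?_
    intro z hz
    simp only [Set.mem_diff, Set.mem_singleton_iff] at hz ⊢
    exact hz
  · have hW := isLittleO_W exp_neg_c1 (Ne.symm c1_ne_neg_c1)
    refine hW.congr' ?_ EventuallyEq.rfl
    have hev : ∀ᶠ z in 𝓝[≠] (-c1), z ≠ c1 := by
      refine eventually_nhdsWithin_of_eventually_nhds ?_
      refine IsOpen.eventually_mem isOpen_compl_singleton ?_
      exact Set.mem_compl_singleton_iff.mpr (fun h => c1_ne_neg_c1 (by rw [h]))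
    have hH1c : H1 (-c1) = Hc (-c1) := Function.update_of_ne
      (fun h => c1_ne_neg_c1 (by rw [h])) _ _
    filter_upwards [hev] with z hz
    have hz' : H1 z = Hc z := Function.update_of_ne hz _ _
    rw [hz', hH1c]
    simp only [Hc]
    ring


lemma Ht_iteratedDeriv_bound : ∃ M : ℝ, 0 ≤ M ∧ ∀ n : ℕ,
    ‖iteratedDeriv n Ht 0‖ ≤ n.factorial * M / Real.pi ^ n := by
  have hpi := Real.pi_pos
  set r : NNReal := ⟨5 * Real.pi / 4, by positivity⟩ with hr
  have hrR : (r : ℝ) = 5 * Real.pi / 4 := rfl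
  have hrpos : (0 : NNReal) < r := by
    rw [← NNReal.coe_lt_coe, hrR]
    positivity
  have hsub : closedBall (0:ℂ) r ⊆ ball (0:ℂ) Rr := by
    apply closedBall_subset_ball
    rw [hrR, Rr]; linarith
  have hd : DifferentiableOn ℂ Ht (closedBall (0:ℂ) r) := Ht_diffOn.mono hsub
  have hp := hd.hasFPowerSeriesOnBall hrpos
  -- bound on the sphere
  have hcont : ContinuousOn Ht (sphere (0:ℂ) r) :=
    (Ht_diffOn.continuousOn).mono (sphere_subset_closedBall.trans hsub)
  obtain ⟨M0, hM0⟩ := (isCompact_sphere (0:ℂ) r).exists_bound_of_continuousOn hcont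
  set M := max M0 0 with hM
  have hMnonneg : 0 ≤ M := le_max_right _ _
  have hMb : ∀ z ∈ sphere (0:ℂ) (r:ℝ), ‖Ht z‖ ≤ M := fun z hz =>
    (hM0 z hz).trans (le_max_left _ _)
  refine ⟨M, hMnonneg, fun n => ?_⟩
  -- identify iteratedDeriv with series coefficient
  have h1 := hp.factorial_smul (1:ℂ) n
  have h2 : iteratedFDeriv ℂ n Ht 0 (fun _ => 1) = iteratedDeriv n Ht 0 := by
    rw [iteratedFDeriv_apply_eq_iteratedDeriv_mul_prod]
    simp
  rw [h2] at h1
  -- bound the integral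
  have hcm : Continuous fun θ : ℝ => Ht (circleMap 0 r θ) := by
    refine ContinuousOn.comp_continuous (Ht_diffOn.continuousOn) (continuous_circleMap 0 r) ?_
    intro θ
    exact hsub (circleMap_mem_closedBall 0 (NNReal.coe_nonneg r) θ)
  have hint : ∫ θ : ℝ in (0)..(2 * Real.pi), ‖Ht (circleMap 0 r θ)‖
      ≤ 2 * Real.pi * M := by
    have hle : ∀ θ ∈ Set.uIcc (0:ℝ) (2 * Real.pi), ‖Ht (circleMap 0 r θ)‖ ≤ M := by
      intro θ _
      exact hMb _ (circleMap_mem_sphere 0 (NNReal.coe_nonneg r) θ)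
    calc ∫ θ : ℝ in (0)..(2 * Real.pi), ‖Ht (circleMap 0 r θ)‖
        ≤ ∫ _ : ℝ in (0)..(2 * Real.pi), M := by
          refine intervalIntegral.integral_mono_on (by positivity) ?_
            intervalIntegrable_const ?_
          · exact (hcm.norm).intervalIntegrable _ _
          · intro θ hθ
            exact hle θ (Set.mem_uIcc_of_le hθ.1 hθ.2)
      _ = 2 * Real.pi * M := by
          rw [intervalIntegral.integral_const, smul_eq_mul]
          ring
  have hcoeff : ‖cauchyPowerSeries Ht 0 r n‖ ≤ M * ((r:ℝ)⁻¹) ^ n := by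
    refine (norm_cauchyPowerSeries_le Ht 0 r n).trans ?_
    have habs : |(r:ℝ)| = (r:ℝ) := abs_of_nonneg (NNReal.coe_nonneg r)
    rw [habs]
    refine mul_le_mul_of_nonneg_right ?_ (by positivity)
    calc (2 * Real.pi)⁻¹ * ∫ θ : ℝ in (0)..(2 * Real.pi), ‖Ht (circleMap 0 r θ)‖
        ≤ (2 * Real.pi)⁻¹ * (2 * Real.pi * M) := by
          refine mul_le_mul_of_nonneg_left hint (by positivity)
      _ = M := by field_simp
  have hc1 : ‖cauchyPowerSeries Ht 0 r n (fun _ => 1)‖ ≤ M * ((r:ℝ)⁻¹) ^ n := by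
    refine le_trans ((cauchyPowerSeries Ht 0 r n).le_opNorm _) ?_
    simpa using hcoeff
  have hfin : ‖iteratedDeriv n Ht 0‖ ≤ n.factorial * (M * ((r:ℝ)⁻¹) ^ n) := by
    rw [← h1, ← Nat.cast_smul_eq_nsmul ℂ, norm_smul]
    simp only [norm_natCast]
    exact mul_le_mul_of_nonneg_left hc1 (by positivity)
  refine hfin.trans ?_
  rw [div_eq_mul_inv, ← inv_pow, mul_assoc]
  refine mul_le_mul_of_nonneg_left ?_ (by positivity)
  refine mul_le_mul_of_nonneg_left ?_ hMnonneg
  refine pow_le_pow_left₀ (by positivity) ?_ n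
  rw [hrR]
  rw [inv_le_inv₀ (by positivity) hpi]
  linarith


def Ec : ℂ → ℂ := fun z => (z - c1)⁻¹ + (z - (-c1))⁻¹

lemma ne_c1_of_mem {z : ℂ} (hz : z ∈ ball (0:ℂ) (Real.pi / 2)) : z ≠ c1 ∧ z ≠ -c1 := by
  rw [mem_ball_zero_iff] at hz
  have hpi := Real.pi_pos
  constructor
  · intro h
    rw [h, abs_c1] at hz
    linarith
  · intro h
    rw [h, norm_neg, abs_c1] at hz
    linarith

lemma Gc_eq_on : Set.EqOn Gc (Ht + Ec) (ball (0:ℂ) (Real.pi / 2)) := by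
  intro z hz
  obtain ⟨hz1, hz2⟩ := ne_c1_of_mem hz
  have h1 : Ht z = Hc z := by
    rw [Ht, Function.update_of_ne hz2, H1, Function.update_of_ne hz1]
  simp only [Pi.add_apply, h1, Hc, Ec]
  ring

lemma Gc_iteratedDeriv_bound : ∃ C' : ℝ, 0 < C' ∧ ∀ n : ℕ,
    ‖iteratedDeriv n Gc 0‖ ≤ n.factorial * C' / Real.pi ^ n := by
  have hpi := Real.pi_pos
  obtain ⟨M, hM0, hM⟩ := Ht_iteratedDeriv_bound
  refine ⟨M + 2 / Real.pi, by positivity, fun n => ?_⟩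
  set s : Set ℂ := ball (0:ℂ) (Real.pi / 2) with hs
  have hs_open : IsOpen s := isOpen_ball
  have h0s : (0:ℂ) ∈ s := by
    rw [hs, mem_ball_zero_iff]
    simpa using by positivity
  have hsub : s ⊆ ball (0:ℂ) Rr := by
    apply ball_subset_ball
    rw [Rr]; linarith
  -- switch from Gc to Ht + Ec
  have heq : iteratedDeriv n Gc 0 = iteratedDeriv n (Ht + Ec) 0 :=
    Gc_eq_on.iteratedDeriv_of_isOpen hs_open n h0s
  -- additivity
  have hHt_cd : ContDiffOn ℂ n Ht s :=
    ((Ht_diffOn.mono hsub).analyticOnNhd hs_open).contDiffOn_of_completeSpace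
  have hEc_diff : DifferentiableOn ℂ Ec s := by
    refine DifferentiableOn.add ?_ ?_ <;>
    · intro z hz
      refine (DifferentiableAt.differentiableWithinAt ?_)
      refine DifferentiableAt.inv ((differentiableAt_id.sub (differentiableAt_const _))) ?_
      refine sub_ne_zero.mpr ?_
      first
        | exact (ne_c1_of_mem hz).1
        | exact (ne_c1_of_mem hz).2
  have hEc_cd : ContDiffOn ℂ n Ec s :=
    (hEc_diff.analyticOnNhd hs_open).contDiffOn_of_completeSpace
  have hadd : iteratedDeriv n (Ht + Ec) 0 = iteratedDeriv n Ht 0 + iteratedDeriv n Ec 0 := by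
    rw [← my_iteratedDerivWithin_of_isOpen n hs_open h0s,
      ← my_iteratedDerivWithin_of_isOpen (f := Ht) n hs_open h0s,
      ← my_iteratedDerivWithin_of_isOpen (f := Ec) n hs_open h0s]
    exact iteratedDerivWithin_add h0s hs_open.uniqueDiffOn (hHt_cd 0 h0s) (hEc_cd 0 h0s)
  -- Ec bound via explicit formula
  have hE1 : iteratedDeriv n (fun w => (w - c1)⁻¹) 0
      = (-1) ^ n * (n.factorial : ℂ) * (0 - c1) ^ (-(n:ℤ) - 1) :=
    iteratedDeriv_inv_sub c1 n 0 (ne_c1_of_mem h0s).1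
  have hE2 : iteratedDeriv n (fun w => (w - (-c1))⁻¹) 0
      = (-1) ^ n * (n.factorial : ℂ) * (0 - (-c1)) ^ (-(n:ℤ) - 1) :=
    iteratedDeriv_inv_sub (-c1) n 0 (ne_c1_of_mem h0s).2
  have hEadd : iteratedDeriv n Ec 0 = iteratedDeriv n (fun w => (w - c1)⁻¹) 0
      + iteratedDeriv n (fun w => (w - (-c1))⁻¹) 0 := by
    have hd1 : DifferentiableOn ℂ (fun w : ℂ => (w - c1)⁻¹) s := fun z hz =>
      (show DifferentiableAt ℂ (fun w : ℂ => (w - c1)⁻¹) z from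
        DifferentiableAt.inv ((differentiableAt_id.sub (differentiableAt_const _)))
        (sub_ne_zero.mpr (ne_c1_of_mem hz).1)).differentiableWithinAt
    have hd2 : DifferentiableOn ℂ (fun w : ℂ => (w - (-c1))⁻¹) s := fun z hz =>
      (show DifferentiableAt ℂ (fun w : ℂ => (w - (-c1))⁻¹) z from
        DifferentiableAt.inv ((differentiableAt_id.sub (differentiableAt_const _)))
        (sub_ne_zero.mpr (ne_c1_of_mem hz).2)).differentiableWithinAt
    rw [← my_iteratedDerivWithin_of_isOpen n hs_open h0s,
      ← my_iteratedDerivWithin_of_isOpen (f := fun w : ℂ => (w - c1)⁻¹) n hs_open h0s,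
      ← my_iteratedDerivWithin_of_isOpen (f := fun w : ℂ => (w - (-c1))⁻¹) n hs_open h0s]
    exact iteratedDerivWithin_add h0s hs_open.uniqueDiffOn
      ((hd1.analyticOnNhd hs_open).contDiffOn_of_completeSpace 0 h0s)
      ((hd2.analyticOnNhd hs_open).contDiffOn_of_completeSpace 0 h0s)
  have hnormE1 : ‖(-1 : ℂ) ^ n * (n.factorial : ℂ) * (0 - c1) ^ (-(n:ℤ) - 1)‖
      = n.factorial / Real.pi ^ (n + 1) := by
    simp only [norm_mul, norm_pow, norm_neg, norm_one, one_pow, one_mul, norm_zpow,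
      zero_sub, norm_neg, abs_c1, Complex.norm_natCast]
    rw [show (-(n:ℤ) - 1) = -((n:ℤ) + 1) by ring, zpow_neg, ← zpow_natCast (Real.pi) (n + 1),
      div_eq_mul_inv]
    push_cast
    ring
  have hnormE2 : ‖(-1 : ℂ) ^ n * (n.factorial : ℂ) * (0 - (-c1)) ^ (-(n:ℤ) - 1)‖
      = n.factorial / Real.pi ^ (n + 1) := by
    simp only [norm_mul, norm_pow, norm_neg, norm_one, one_pow, one_mul, norm_zpow,
      zero_sub, norm_neg, abs_c1, Complex.norm_natCast]
    rw [show (-(n:ℤ) - 1) = -((n:ℤ) + 1) by ring, zpow_neg, ← zpow_natCast (Real.pi) (n + 1),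
      div_eq_mul_inv]
    push_cast
    ring
  have hEbound : ‖iteratedDeriv n Ec 0‖ ≤ 2 * n.factorial / Real.pi ^ (n + 1) := by
    rw [hEadd, hE1, hE2]
    refine (norm_add_le _ _).trans ?_
    rw [hnormE1, hnormE2]
    rw [← add_div]
    apply le_of_eq
    ring
  -- combine
  rw [heq, hadd]
  refine (norm_add_le _ _).trans ?_
  have := hM n
  have hfinal : n.factorial * M / Real.pi ^ n + 2 * n.factorial / Real.pi ^ (n + 1)
      = n.factorial * (M + 2 / Real.pi) / Real.pi ^ n := by
    field_simp
    ring
  calc ‖iteratedDeriv n Ht 0‖ + ‖iteratedDeriv n Ec 0‖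
      ≤ n.factorial * M / Real.pi ^ n + 2 * n.factorial / Real.pi ^ (n + 1) :=
        add_le_add (hM n) hEbound
    _ = n.factorial * (M + 2 / Real.pi) / Real.pi ^ n := hfinal

lemma deriv_logistic : deriv (fun x : ℝ => Real.log (1 + Real.exp x)) = gr := by
  funext x
  have hd : HasDerivAt (fun x : ℝ => 1 + Real.exp x) (Real.exp x) x :=
    (Real.hasDerivAt_exp x).const_add 1
  have hlog : HasDerivAt (fun x : ℝ => Real.log (1 + Real.exp x))
      ((1 + Real.exp x)⁻¹ * Real.exp x) x :=
    (Real.hasDerivAt_log (one_add_exp_real_pos x).ne').comp (h := fun x : ℝ => 1 + Real.exp x) x hd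
  rw [hlog.deriv, gr]
  rw [div_eq_inv_mul]

end LogisticAux

/-- there is a universal constant `C > 0` such that for all `q ≥ 1`,
`|f^{(q)}(0)/q!| ≤ C / (q * π^q)` where `f(x) = log(1 + exp x)`. -/
theorem taylor_coeff_logistic_bound :
    ∃ C : ℝ, 0 < C ∧ ∀ q : ℕ, 1 ≤ q →
      |iteratedDeriv q (fun x : ℝ => Real.log (1 + Real.exp x)) 0 / (Nat.factorial q : ℝ)| ≤
        C / (q * Real.pi ^ q) := by
  obtain ⟨C', hC'pos, hC'⟩ := Gc_iteratedDeriv_bound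
  have hpi := Real.pi_pos
  refine ⟨C' * Real.pi, by positivity, ?_⟩
  intro q hq
  obtain ⟨n, rfl⟩ : ∃ n, q = n + 1 := ⟨q - 1, (Nat.succ_pred_eq_of_pos hq).symm⟩
  rw [iteratedDeriv_succ', deriv_logistic]
  have htrans := iteratedDeriv_real_complex Uc_open Gc_diffOn real_mem_Uc Gc_real n 0
  have habs : |iteratedDeriv n gr 0| = ‖iteratedDeriv n Gc 0‖ := by
    calc |iteratedDeriv n gr 0| = ‖((iteratedDeriv n gr 0 : ℝ) : ℂ)‖ :=
          (Complex.norm_real _).symm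
      _ = ‖iteratedDeriv n Gc 0‖ := by rw [htrans, Complex.ofReal_zero]
  have hA : |iteratedDeriv n gr 0| ≤ n.factorial * C' / Real.pi ^ n := by
    rw [habs]; exact hC' n
  have hfactpos : (0:ℝ) < ((n+1).factorial : ℝ) := by
    exact_mod_cast Nat.factorial_pos (n+1)
  rw [abs_div, abs_of_pos hfactpos, div_le_div_iff₀ (by positivity) (by positivity)]
  have hstep := mul_le_mul_of_nonneg_right hA
    (le_of_lt (show (0:ℝ) < ((n:ℝ) + 1) * Real.pi ^ (n+1) by positivity))
  have hfact : (((n+1).factorial : ℕ) : ℝ) = ((n:ℝ) + 1) * (n.factorial : ℝ) := by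
    rw [Nat.factorial_succ]
    push_cast
    ring
  calc |iteratedDeriv n gr 0| * (((n:ℕ)+1 : ℕ) * Real.pi ^ (n+1))
      = |iteratedDeriv n gr 0| * (((n:ℝ) + 1) * Real.pi ^ (n+1)) := by push_cast; ring
    _ ≤ (n.factorial * C' / Real.pi ^ n) * (((n:ℝ) + 1) * Real.pi ^ (n+1)) := hstep
    _ = C' * Real.pi * ((n+1).factorial : ℝ) := by
        rw [hfact, pow_succ]
        field_simp
end

section
/- With Z_t = W_t ⊙ X_t where W_t has i.i.d. Bernoulli(p) entries independent of X, the estimator L^{(2)}_{Z,p}(a) = (1/T) sum_t [ (a^T Z_t)/(2p) - Z_{t+1,m}(a^T Z_t)/p^2 + sum_{i≠j} a_i a_j Z_{t,i} Z_{t,j} / (8 p^2) + sum_i a_i^2 Z_{t,i} / (8p) ] satisfies E[L^{(2)}_{Z,p}(a) | X] = (1/T) sum_t [ (a^T X_t)/2 - X_{t+1,m}(a^T X_t) + (a^T X_t)^2 / 8 ] for every vector a. -/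
open MeasureTheory ProbabilityTheory

section Aux

variable {Ω : Type*} [MeasurableSpace Ω] {μ : Measure Ω} [IsProbabilityMeasure μ]

lemma aux_indicator_eq {f : Ω → ℝ} (h : ∀ ω, f ω = 0 ∨ f ω = 1) :
    f = Set.indicator (f ⁻¹' {1}) (fun _ => (1 : ℝ)) := by
  funext ω
  rcases h ω with h0 | h1
  · simp [Set.indicator, Set.mem_preimage, h0]
  · simp [Set.indicator, Set.mem_preimage, h1]

lemma aux_integrable_01 {f : Ω → ℝ} (hf : Measurable f) (h : ∀ ω, f ω = 0 ∨ f ω = 1) :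
    Integrable f μ := by
  rw [aux_indicator_eq h]
  exact (integrable_const (1 : ℝ)).indicator (hf (measurableSet_singleton 1))

lemma aux_integral_01 {f : Ω → ℝ} (hf : Measurable f) (h : ∀ ω, f ω = 0 ∨ f ω = 1) :
    ∫ ω, f ω ∂μ = (μ {ω | f ω = 1}).toReal := by
  conv_lhs => rw [aux_indicator_eq h]
  rw [integral_indicator_const (1 : ℝ) (hf (measurableSet_singleton 1))]
  simp [Set.preimage, smul_eq_mul]
  rfl

end Aux

/-- unbiasedness of the degree-2 missing-data loss. With `Z_{t,i} = W_{t,i} X_{t,i}`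
where `X ∈ {0,1}` is fixed (conditioning on `X`) and the `W_{t,i}` are i.i.d. Bernoulli(p),
`E[L^{(2)}_{Z,p}(a) | X]` equals the degree-2 Taylor truncation of the complete-data loss. -/
theorem unbiased_degree_two_loss {Ω : Type*} [MeasurableSpace Ω] {μ : Measure Ω}
    [IsProbabilityMeasure μ] {M : ℕ} (T : ℕ) (hT : 0 < T) (m : Fin M)
    (p : ℝ) (hp : 0 < p) (hp1 : p ≤ 1)
    (W : ℕ → Fin M → Ω → ℝ) (X : ℕ → Fin M → ℝ) (a : Fin M → ℝ)
    (hWval : ∀ t i ω, W t i ω = 0 ∨ W t i ω = 1)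
    (hWmeas : ∀ t i, Measurable (W t i))
    (hWind : iIndepFun
      (fun q : ℕ × Fin M => W q.1 q.2) μ)
    (hWp : ∀ t i, (μ {ω | W t i ω = 1}).toReal = p)
    (hXval : ∀ t i, X t i = 0 ∨ X t i = 1) :
    (∫ ω,
        (1 / (T : ℝ)) * ∑ t ∈ Finset.range T,
          ((∑ i, a i * (W t i ω * X t i)) / (2 * p)
            - (W (t + 1) m ω * X (t + 1) m) * (∑ i, a i * (W t i ω * X t i)) / p ^ 2
            + (∑ i, ∑ j, if i ≠ j then
                a i * a j * (W t i ω * X t i) * (W t j ω * X t j) / (8 * p ^ 2) else 0)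
            + ∑ i, a i ^ 2 * (W t i ω * X t i) / (8 * p)) ∂μ) =
      (1 / (T : ℝ)) * ∑ t ∈ Finset.range T,
        ((∑ i, a i * X t i) / 2
          - X (t + 1) m * (∑ i, a i * X t i)
          + (∑ i, a i * X t i) ^ 2 / 8) := by
  have hp0 : p ≠ 0 := ne_of_gt hp
  -- Basic facts about W
  have hWint : ∀ t i, Integrable (W t i) μ := fun t i =>
    aux_integrable_01 (hWmeas t i) (hWval t i)
  have hWE : ∀ t i, ∫ ω, W t i ω ∂μ = p := fun t i => by
    rw [aux_integral_01 (hWmeas t i) (hWval t i)]; exact hWp t i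
  have hprodval : ∀ t i s j (ω : Ω), W t i ω * W s j ω = 0 ∨ W t i ω * W s j ω = 1 := by
    intro t i s j ω
    rcases hWval t i ω with h1 | h1 <;> rcases hWval s j ω with h2 | h2 <;>
      simp [h1, h2]
  have hW2int : ∀ t i s j, Integrable (fun ω => W t i ω * W s j ω) μ := fun t i s j =>
    aux_integrable_01 ((hWmeas t i).mul (hWmeas s j)) (hprodval t i s j)
  have hW2E : ∀ t i s j, ((t, i) : ℕ × Fin M) ≠ (s, j) →
      ∫ ω, W t i ω * W s j ω ∂μ = p ^ 2 := by
    intro t i s j hne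
    rw [aux_integral_01 (f := fun ω => W t i ω * W s j ω) ((hWmeas t i).mul (hWmeas s j)) (hprodval t i s j)]
    have hset : {ω | W t i ω * W s j ω = 1}
        = (fun q : ℕ × Fin M => W q.1 q.2) (t, i) ⁻¹' {1}
          ∩ (fun q : ℕ × Fin M => W q.1 q.2) (s, j) ⁻¹' {1} := by
      ext ω
      simp only [Set.mem_setOf_eq, Set.mem_inter_iff, Set.mem_preimage,
        Set.mem_singleton_iff]
      constructor
      · intro h
        rcases hWval t i ω with h1 | h1 <;> rcases hWval s j ω with h2 | h2 <;>
          simp [h1, h2] at h ⊢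
      · rintro ⟨h1, h2⟩; rw [h1, h2, mul_one]
    rw [hset, (hWind.indepFun hne).measure_inter_preimage_eq_mul _ _
      (measurableSet_singleton 1) (measurableSet_singleton 1)]
    rw [ENNReal.toReal_mul]
    have e1 : (μ ((fun q : ℕ × Fin M => W q.1 q.2) (t, i) ⁻¹' {1})).toReal = p := by
      have := hWp t i
      simpa [Set.preimage] using this
    have e2 : (μ ((fun q : ℕ × Fin M => W q.1 q.2) (s, j) ⁻¹' {1})).toReal = p := by
      have := hWp s j
      simpa [Set.preimage] using this
    rw [e1, e2, sq]
  -- Rewrite integrand in a normal linear form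
  have hform : ∀ t (ω : Ω),
      ((∑ i, a i * (W t i ω * X t i)) / (2 * p)
        - (W (t + 1) m ω * X (t + 1) m) * (∑ i, a i * (W t i ω * X t i)) / p ^ 2
        + (∑ i, ∑ j, if i ≠ j then
            a i * a j * (W t i ω * X t i) * (W t j ω * X t j) / (8 * p ^ 2) else 0)
        + ∑ i, a i ^ 2 * (W t i ω * X t i) / (8 * p))
      = (∑ i, (a i * X t i / (2 * p)) * W t i ω)
        - (∑ i, (X (t + 1) m * a i * X t i / p ^ 2) * (W (t + 1) m ω * W t i ω))
        + (∑ i, ∑ j, (if i ≠ j then a i * a j * X t i * X t j / (8 * p ^ 2) else 0)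
            * (W t i ω * W t j ω))
        + ∑ i, (a i ^ 2 * X t i / (8 * p)) * W t i ω := by
    intro t ω
    have h1 : (∑ i, a i * (W t i ω * X t i)) / (2 * p)
        = ∑ i, (a i * X t i / (2 * p)) * W t i ω := by
      rw [Finset.sum_div]; exact Finset.sum_congr rfl fun i _ => by ring
    have h2 : (W (t + 1) m ω * X (t + 1) m) * (∑ i, a i * (W t i ω * X t i)) / p ^ 2
        = ∑ i, (X (t + 1) m * a i * X t i / p ^ 2) * (W (t + 1) m ω * W t i ω) := by
      rw [Finset.mul_sum, Finset.sum_div]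
      exact Finset.sum_congr rfl fun i _ => by ring
    have h3 : ∀ i j : Fin M,
        (if i ≠ j then a i * a j * (W t i ω * X t i) * (W t j ω * X t j) / (8 * p ^ 2) else 0)
        = (if i ≠ j then a i * a j * X t i * X t j / (8 * p ^ 2) else 0)
            * (W t i ω * W t j ω) := by
      intro i j
      split_ifs with h
      · ring
      · ring
    have h4 : ∀ i : Fin M, a i ^ 2 * (W t i ω * X t i) / (8 * p)
        = (a i ^ 2 * X t i / (8 * p)) * W t i ω := fun i => by ring
    rw [h1, h2]
    congr 1
    congr 1
    · exact Finset.sum_congr rfl fun i _ => Finset.sum_congr rfl fun j _ => h3 i j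
    · exact Finset.sum_congr rfl fun i _ => h4 i
  -- Integrability of each piece
  have int1 : ∀ t, Integrable (fun ω => ∑ i, (a i * X t i / (2 * p)) * W t i ω) μ :=
    fun t => integrable_finset_sum _ fun i _ => (hWint t i).const_mul _
  have int2 : ∀ t, Integrable
      (fun ω => ∑ i, (X (t + 1) m * a i * X t i / p ^ 2) * (W (t + 1) m ω * W t i ω)) μ :=
    fun t => integrable_finset_sum _ fun i _ => (hW2int (t + 1) m t i).const_mul _
  have int3 : ∀ t, Integrable
      (fun ω => ∑ i, ∑ j : Fin M, (if i ≠ j then a i * a j * X t i * X t j / (8 * p ^ 2) else 0)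
          * (W t i ω * W t j ω)) μ :=
    fun t => integrable_finset_sum _ fun i _ => integrable_finset_sum _ fun j _ =>
      (hW2int t i t j).const_mul _
  have int4 : ∀ t, Integrable (fun ω => ∑ i, (a i ^ 2 * X t i / (8 * p)) * W t i ω) μ :=
    fun t => integrable_finset_sum _ fun i _ => (hWint t i).const_mul _
  -- integral of each per-t summand
  have hper : ∀ t, (∫ ω,
      ((∑ i, a i * (W t i ω * X t i)) / (2 * p)
        - (W (t + 1) m ω * X (t + 1) m) * (∑ i, a i * (W t i ω * X t i)) / p ^ 2
        + (∑ i, ∑ j, if i ≠ j then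
            a i * a j * (W t i ω * X t i) * (W t j ω * X t j) / (8 * p ^ 2) else 0)
        + ∑ i, a i ^ 2 * (W t i ω * X t i) / (8 * p)) ∂μ)
      = ((∑ i, a i * X t i) / 2
          - X (t + 1) m * (∑ i, a i * X t i)
          + (∑ i, a i * X t i) ^ 2 / 8) := by
    intro t
    simp only [hform t]
    have hA : Integrable (fun ω => (∑ i, (a i * X t i / (2 * p)) * W t i ω)
        - (∑ i, (X (t + 1) m * a i * X t i / p ^ 2) * (W (t + 1) m ω * W t i ω))) μ :=
      (int1 t).sub (int2 t)
    have hB : Integrable (fun ω => ((∑ i, (a i * X t i / (2 * p)) * W t i ω)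
        - (∑ i, (X (t + 1) m * a i * X t i / p ^ 2) * (W (t + 1) m ω * W t i ω)))
        + (∑ i, ∑ j : Fin M, (if i ≠ j then a i * a j * X t i * X t j / (8 * p ^ 2) else 0)
            * (W t i ω * W t j ω))) μ := hA.add (int3 t)
    rw [integral_add hB (int4 t),
      integral_add hA (int3 t),
      integral_sub (int1 t) (int2 t),
      integral_finset_sum _ (fun i _ => (hWint t i).const_mul _),
      integral_finset_sum _ (fun i _ => (hW2int (t + 1) m t i).const_mul _),
      integral_finset_sum _ (fun i _ => integrable_finset_sum _ fun j _ =>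
        (hW2int t i t j).const_mul _),
      integral_finset_sum _ (fun i _ => (hWint t i).const_mul _)]
    have e1 : ∀ i : Fin M, (∫ ω, (a i * X t i / (2 * p)) * W t i ω ∂μ)
        = a i * X t i / 2 := by
      intro i
      rw [integral_const_mul, hWE t i]
      field_simp
    have e2 : ∀ i : Fin M,
        (∫ ω, (X (t + 1) m * a i * X t i / p ^ 2) * (W (t + 1) m ω * W t i ω) ∂μ)
        = X (t + 1) m * a i * X t i := by
      intro i
      rw [integral_const_mul, hW2E (t + 1) m t i (by simp)]
      field_simp
    have e3 : ∀ i j : Fin M,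
        (∫ ω, (if i ≠ j then a i * a j * X t i * X t j / (8 * p ^ 2) else 0)
          * (W t i ω * W t j ω) ∂μ)
        = if i ≠ j then a i * a j * X t i * X t j / 8 else 0 := by
      intro i j
      rw [integral_const_mul]
      by_cases h : i = j
      · simp [h]
      · rw [if_pos h, if_pos h, hW2E t i t j (by simp [h])]
        field_simp
    have e4 : ∀ i : Fin M, (∫ ω, (a i ^ 2 * X t i / (8 * p)) * W t i ω ∂μ)
        = a i ^ 2 * X t i / 8 := by
      intro i
      rw [integral_const_mul, hWE t i]
      field_simp
    have e3' : ∀ i : Fin M,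
        (∫ ω, ∑ j : Fin M, (if i ≠ j then a i * a j * X t i * X t j / (8 * p ^ 2) else 0)
          * (W t i ω * W t j ω) ∂μ)
        = ∑ j : Fin M, ∫ ω, (if i ≠ j then a i * a j * X t i * X t j / (8 * p ^ 2) else 0)
            * (W t i ω * W t j ω) ∂μ :=
      fun i => integral_finset_sum _ fun j _ => (hW2int t i t j).const_mul _
    simp only [e3', e1, e2, e3, e4]
    -- now pure algebra with X values 0/1
    have key : ∀ i : Fin M, ∑ j, (a i * X t i) * (a j * X t j)
        = (∑ j, if i ≠ j then a i * a j * X t i * X t j else 0) + a i ^ 2 * X t i := by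
      intro i
      have hdiag : ∑ j ∈ ({i} : Finset (Fin M)), (a i * X t i) * (a j * X t j)
          = a i ^ 2 * X t i := by
        rw [Finset.sum_singleton]
        rcases hXval t i with h | h
        · simp [h]
        · rw [h]; ring
      have hoff : ∑ j ∈ ({i} : Finset (Fin M))ᶜ, (a i * X t i) * (a j * X t j)
          = ∑ j, if i ≠ j then a i * a j * X t i * X t j else 0 := by
        rw [show (∑ j, if i ≠ j then a i * a j * X t i * X t j else 0)
            = ∑ j ∈ Finset.univ.filter (fun j => i ≠ j),
                a i * a j * X t i * X t j from (Finset.sum_filter _ _).symm]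
        rw [show (Finset.univ.filter fun j => i ≠ j) = ({i} : Finset (Fin M))ᶜ by
          ext j; simp [eq_comm, Ne]]
        exact Finset.sum_congr rfl fun j _ => by ring
      have split : ∑ j, (a i * X t i) * (a j * X t j)
          = (∑ j ∈ ({i} : Finset (Fin M)), (a i * X t i) * (a j * X t j))
            + ∑ j ∈ ({i} : Finset (Fin M))ᶜ, (a i * X t i) * (a j * X t j) :=
        (Finset.sum_add_sum_compl _ _).symm
      rw [split, hdiag, hoff, add_comm]
    have hsq : (∑ i, a i * X t i) ^ 2
        = (∑ i, ∑ j, if i ≠ j then a i * a j * X t i * X t j else 0)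
          + ∑ i, a i ^ 2 * X t i := by
      calc (∑ i, a i * X t i) ^ 2 = ∑ i, ∑ j, (a i * X t i) * (a j * X t j) := by
            rw [sq, Finset.sum_mul_sum]
        _ = ∑ i, ((∑ j, if i ≠ j then a i * a j * X t i * X t j else 0)
              + a i ^ 2 * X t i) := Finset.sum_congr rfl fun i _ => key i
        _ = _ := Finset.sum_add_distrib
    rw [hsq]
    have hL : ∑ i, a i * X t i / 2 = (∑ i, a i * X t i) / 2 := (Finset.sum_div _ _ _).symm
    have hM2 : ∑ i, X (t + 1) m * a i * X t i
        = X (t + 1) m * ∑ i, a i * X t i := by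
      rw [Finset.mul_sum]; exact Finset.sum_congr rfl fun i _ => by ring
    have h3' : (∑ i, ∑ j, if i ≠ j then a i * a j * X t i * X t j / 8 else 0)
        = (∑ i, ∑ j, if i ≠ j then a i * a j * X t i * X t j else 0) / 8 := by
      rw [Finset.sum_div]
      refine Finset.sum_congr rfl fun i _ => ?_
      rw [Finset.sum_div]
      refine Finset.sum_congr rfl fun j _ => ?_
      split_ifs <;> simp
    rw [hL, hM2, h3']
    have h4' : ∑ i, a i ^ 2 * X t i / 8 = (∑ i, a i ^ 2 * X t i) / 8 :=
      (Finset.sum_div _ _ _).symm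
    rw [h4']
    ring
  -- combine
  rw [integral_const_mul, integral_finset_sum]
  · congr 1
    exact Finset.sum_congr rfl fun t _ => hper t
  · intro t _
    refine Integrable.congr ((((int1 t).sub (int2 t)).add (int3 t)).add (int4 t)) ?_
    filter_upwards with ω
    exact (hform t ω).symm
end
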